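/- Let w ∈ (0,1) and L ∈ (0, 2π√w). Then there exists ε > 0 such that every continuously differentiable L-periodic function v : ℝ → ℝ with ∫₀^L v(x) dx = 0 and 0 < ∫₀^L v'(x)² dx ≤ ε² satisfies S_w(v) > 0. In particular the infimum of S_w over the sphere { v zero-mean, C¹, L-periodic : ∫₀^L (v')² dx = ε² } is strictly positive, while S_w(0) = 0. -/

import Mathlib

open Real MeasureTheory
open Complex intervalIntegral AddCircle

lemma sinh_le_mul_cosh {s : ℝ} (hs : 0 ≤ s) : Real.sinh s ≤ s * Real.cosh s := by
  have h : ∀ x ∈ Set.Ici (0:ℝ), 0 ≤ deriv (fun t => t * Real.cosh t - Real.sinh t) x := by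
    intro x hx
    have : HasDerivAt (fun t => t * Real.cosh t - Real.sinh t)
        (1 * Real.cosh x + x * Real.sinh x - Real.cosh x) x :=
      ((hasDerivAt_id x).mul (Real.hasDerivAt_cosh x)).sub (Real.hasDerivAt_sinh x)
    rw [this.deriv]
    have := Real.sinh_nonneg_iff.mpr (Set.mem_Ici.mp hx)
    nlinarith [Set.mem_Ici.mp hx]
  have hm : MonotoneOn (fun t => t * Real.cosh t - Real.sinh t) (Set.Ici 0) := by
    apply monotoneOn_of_deriv_nonneg (convex_Ici 0)
    · exact (Continuous.sub (continuous_id.mul Real.continuous_cosh) Real.continuous_sinh).continuousOn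
    · intro x hx
      exact ((((hasDerivAt_id x).mul (Real.hasDerivAt_cosh x)).sub (Real.hasDerivAt_sinh x))).differentiableAt.differentiableWithinAt
    · intro x hx
      exact h x (interior_subset hx)
  have := hm (Set.self_mem_Ici) (Set.mem_Ici.mpr hs) hs
  simpa using this

lemma cosh_sub_one_le (t : ℝ) : Real.cosh t - 1 ≤ t^2 / 2 * Real.cosh t := by
  -- wlog t ≥ 0 by evenness
  have key : ∀ s : ℝ, 0 ≤ s → Real.cosh s - 1 ≤ s^2 / 2 * Real.cosh s := by
    intro s hs
    have hm : MonotoneOn (fun t => t^2/2 * Real.cosh t - Real.cosh t + 1) (Set.Ici 0) := by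
      apply monotoneOn_of_deriv_nonneg (convex_Ici 0)
      · fun_prop
      · intro x hx
        have : HasDerivAt (fun t => t^2/2 * Real.cosh t - Real.cosh t + 1)
            (x * Real.cosh x + x^2/2 * Real.sinh x - Real.sinh x) x := by
          have h1 : HasDerivAt (fun t : ℝ => t^2/2) x x := by
            simpa using ((hasDerivAt_pow 2 x).div_const 2)
          exact (((h1.mul (Real.hasDerivAt_cosh x)).sub (Real.hasDerivAt_cosh x)).add_const 1)
        exact this.differentiableAt.differentiableWithinAt
      · intro x hx
        have hx0 : (0:ℝ) ≤ x := le_of_lt (by simpa using hx)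
        have : HasDerivAt (fun t => t^2/2 * Real.cosh t - Real.cosh t + 1)
            (x * Real.cosh x + x^2/2 * Real.sinh x - Real.sinh x) x := by
          have h1 : HasDerivAt (fun t : ℝ => t^2/2) x x := by
            simpa using ((hasDerivAt_pow 2 x).div_const 2)
          exact (((h1.mul (Real.hasDerivAt_cosh x)).sub (Real.hasDerivAt_cosh x)).add_const 1)
        rw [this.deriv]
        have h2 := sinh_le_mul_cosh hx0
        have h3 := Real.sinh_nonneg_iff.mpr hx0
        nlinarith
    have := hm Set.self_mem_Ici (Set.mem_Ici.mpr hs) hs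
    simp only [Real.cosh_zero] at this
    nlinarith
  rcases le_total 0 t with h | h
  · exact key t h
  · have := key (-t) (by linarith)
    simpa [Real.cosh_neg] using this

lemma cosh_le_one_add_sq {t : ℝ} (ht : |t| ≤ 1) : Real.cosh t ≤ 1 + t^2 := by
  have h1 := cosh_sub_one_le t
  have h2 : Real.cosh t ≤ Real.cosh 1 := Real.cosh_le_cosh.mpr (by simpa using ht)
  have h3 : Real.cosh 1 ≤ 2 := by
    rw [Real.cosh_eq]
    have he : Real.exp 1 < 2.7182818286 := Real.exp_one_lt_d9
    have he2 : Real.exp (-1) ≤ 1 := Real.exp_le_one_iff.mpr (by norm_num)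
    rw [Real.exp_neg] at he2 ⊢
    nlinarith [Real.exp_pos 1]
  have ht2 : t^2 ≤ 1 := by nlinarith [abs_nonneg t, _root_.sq_abs t]
  nlinarith

lemma poincare_wirtinger (T : ℝ) (hT : 0 < T) (v : ℝ → ℝ) (hv : ContDiff ℝ 1 v)
    (hper : ∀ x, v (x + T) = v x) (hmean : (∫ x in (0:ℝ)..T, v x) = 0) :
    (∫ x in (0:ℝ)..T, (v x)^2) ≤ (T / (2*π))^2 * ∫ x in (0:ℝ)..T, (deriv v x)^2 := by
  haveI : Fact (0 < T) := ⟨hT⟩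
  have hvd : Differentiable ℝ v := hv.differentiable one_ne_zero
  have hdc : Continuous (deriv v) := hv.continuous_deriv le_rfl
  have hdper : ∀ x, deriv v (x + T) = deriv v x := by
    intro x
    have : (fun y => v (y + T)) = v := funext fun y => hper y
    rw [← deriv_comp_add_const v T x, this]
  set F : ℝ → ℂ := fun x => (v x : ℂ) with hF
  set F' : ℝ → ℂ := fun x => Complex.ofReal (deriv v x) with hF'
  have hFper : Function.Periodic F T := fun x => by simp [hF, hper x]
  have hF'per : Function.Periodic F' T := fun x => by simp [hF', hdper x]
  have hFcont : Continuous F := Complex.continuous_ofReal.comp hv.continuous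
  have hF'cont : Continuous F' := Complex.continuous_ofReal.comp hdc
  set G : AddCircle T → ℂ := hFper.lift with hG
  set G' : AddCircle T → ℂ := hF'per.lift with hG'
  have hGc : Continuous G := continuous_coinduced_dom.mpr hFcont
  have hG'c : Continuous G' := continuous_coinduced_dom.mpr hF'cont
  have hGx : ∀ x : ℝ, G (x : AddCircle T) = F x := fun x => Function.Periodic.lift_coe hFper x
  have hG'x : ∀ x : ℝ, G' (x : AddCircle T) = F' x := fun x => Function.Periodic.lift_coe hF'per x
  -- interval integral formula for coefficients
  have coeff_eq : ∀ (H : AddCircle T → ℂ) (Hf : ℝ → ℂ), (∀ x : ℝ, H x = Hf x) → ∀ n : ℤ,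
      fourierCoeff H n = (1/T : ℝ) • ∫ x in (0:ℝ)..T, fourier (-n) (x : AddCircle T) * Hf x := by
    intro H Hf hH n
    rw [fourierCoeff_eq_intervalIntegral H n 0, zero_add]
    congr 1
    refine intervalIntegral.integral_congr fun x _ => ?_
    rw [hH x, smul_eq_mul]
  -- Parseval + summability for continuous functions
  have parseval : ∀ (H : AddCircle T → ℂ), Continuous H →
      Summable (fun n : ℤ => ‖fourierCoeff H n‖^2) ∧
      ∑' n : ℤ, ‖fourierCoeff H n‖^2 = (1/T) * ∫ x in (0:ℝ)..T, ‖H (x : ℝ)‖^2 := by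
    intro H hHc
    set HC : C(AddCircle T, ℂ) := ⟨H, hHc⟩ with hHC
    set HL := ContinuousMap.toLp (E := ℂ) 2 haarAddCircle ℂ HC with hHL
    have hcoeff : ∀ n : ℤ, fourierCoeff (HL : AddCircle T → ℂ) n = fourierCoeff H n := by
      intro n; exact fourierCoeff_toLp HC n
    have hsum : Summable (fun n : ℤ => ‖fourierCoeff H n‖^2) := by
      have hm : Memℓp (fourierBasis.repr HL) 2 := lp.memℓp _
      have := (memℓp_gen_iff (p := 2) (by norm_num)).mp hm
      have h2 : (fun n : ℤ => ‖fourierBasis.repr HL n‖ ^ ((2:ENNReal).toReal))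
          = fun n : ℤ => ‖fourierCoeff H n‖^2 := by
        funext n
        rw [fourierBasis_repr, hcoeff n]
        norm_num
      rwa [h2] at this
    refine ⟨hsum, ?_⟩
    have hpars := tsum_sq_fourierCoeff HL
    simp_rw [hcoeff] at hpars
    rw [hpars]
    -- ∫ ‖HL t‖² ∂haar = (1/T) ∫₀..T ‖H x‖²
    have hae : ∀ᵐ t ∂(haarAddCircle : Measure (AddCircle T)), ‖HL t‖^2 = ‖H t‖^2 := by
      filter_upwards [ContinuousMap.coeFn_toLp (p := 2) haarAddCircle (𝕜 := ℂ) HC] with t ht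
      rw [ht]; rfl
    rw [integral_congr_ae hae]
    have hpre := AddCircle.intervalIntegral_preimage T 0 (fun z => ‖H z‖^2)
    rw [zero_add] at hpre
    rw [hpre, volume_eq_smul_haarAddCircle, MeasureTheory.integral_smul_measure,
      ENNReal.toReal_ofReal hT.le, smul_eq_mul]
    field_simp
  -- zero mean coefficient
  have c0 : fourierCoeff G 0 = 0 := by
    rw [coeff_eq G F hGx 0]
    have : (∫ x in (0:ℝ)..T, fourier (-(0:ℤ)) (x : AddCircle T) * F x) = ∫ x in (0:ℝ)..T, F x := by
      refine intervalIntegral.integral_congr fun x _ => ?_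
      simp [fourier_zero]
    rw [this]
    have : (∫ x in (0:ℝ)..T, F x) = ((∫ x in (0:ℝ)..T, v x : ℝ) : ℂ) := by
      rw [← intervalIntegral.integral_ofReal]
    rw [this, hmean]
    simp
  -- derivative relation
  have key : ∀ n : ℤ, fourierCoeff G' n = (2*π*Complex.I*n/T) * fourierCoeff G n := by
    intro n
    have hu : ∀ x ∈ Set.uIcc (0:ℝ) T, HasDerivAt (fun y : ℝ => (fourier (-n) (y : AddCircle T) : ℂ))
        (-2 * π * Complex.I * n / T * fourier (-n) (x : AddCircle T)) x :=
      fun x _ => hasDerivAt_fourier_neg T n x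
    have hvF : ∀ x ∈ Set.uIcc (0:ℝ) T, HasDerivAt F (F' x) x := by
      intro x _
      exact ((hvd x).hasDerivAt).ofReal_comp
    have hu' : IntervalIntegrable (fun x => -2 * π * Complex.I * n / T * fourier (-n) (x : AddCircle T)) volume 0 T := by
      apply Continuous.intervalIntegrable
      exact continuous_const.mul ((map_continuous (fourier (-n))).comp (AddCircle.continuous_mk' T))
    have hv' : IntervalIntegrable F' volume 0 T := hF'cont.intervalIntegrable _ _
    have ibp := intervalIntegral.integral_mul_deriv_eq_deriv_mul hu hvF hu' hv'
    have hbdry : (fourier (-n) ((T:ℝ) : AddCircle T) : ℂ) * F T - fourier (-n) ((0:ℝ) : AddCircle T) * F 0 = 0 := by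
      have h1 : ((T:ℝ) : AddCircle T) = ((0:ℝ) : AddCircle T) := by
        simp [AddCircle.coe_period]
      have h2 : F T = F 0 := by
        have := hFper 0; rwa [zero_add] at this
      rw [h1, h2]; ring
    rw [hbdry] at ibp
    have hre : (∫ x in (0:ℝ)..T, -2 * ↑π * I * ↑n / ↑T * (fourier (-n)) (x : AddCircle T) * F x)
        = -2 * ↑π * I * ↑n / ↑T * ∫ x in (0:ℝ)..T, (fourier (-n)) (x : AddCircle T) * F x := by
      rw [← intervalIntegral.integral_const_mul]
      exact intervalIntegral.integral_congr fun x _ => by ring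
    rw [hre] at ibp
    rw [coeff_eq G' F' hG'x n, coeff_eq G F hGx n, ibp]
    rw [Complex.real_smul, Complex.real_smul]
    have hTne : (T:ℂ) ≠ 0 := Complex.ofReal_ne_zero.mpr hT.ne'
    push_cast
    field_simp
    ring
  obtain ⟨hsumG, hparsG⟩ := parseval G hGc
  obtain ⟨hsumG', hparsG'⟩ := parseval G' hG'c
  -- pointwise coefficient inequality
  have hπ : (0:ℝ) < π := Real.pi_pos
  have hptwise : ∀ n : ℤ, ‖fourierCoeff G n‖^2 ≤ (T/(2*π))^2 * ‖fourierCoeff G' n‖^2 := by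
    intro n
    rcases eq_or_ne n 0 with h | h
    · rw [h, c0]
      have : (0:ℝ) ≤ (T/(2*π))^2 * ‖fourierCoeff G' 0‖^2 := by positivity
      simpa using this
    · have hrel := key n
      have hnorm : ‖fourierCoeff G' n‖ = (2*π*|(n:ℝ)|/T) * ‖fourierCoeff G n‖ := by
        rw [hrel, norm_mul]
        congr 1
        rw [norm_div, norm_mul, norm_mul, norm_mul]
        simp [Real.pi_nonneg, abs_of_pos hT, Complex.norm_real, Real.norm_eq_abs, abs_of_pos Real.pi_pos]
      have hn1 : (1:ℝ) ≤ |(n:ℝ)| := by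
        rw [← Int.cast_abs]
        exact_mod_cast Int.one_le_abs (by exact_mod_cast h)
      have hnn := norm_nonneg (fourierCoeff G n)
      rw [hnorm]
      have heq : (T/(2*π))^2 * ((2*π*|(n:ℝ)|/T) * ‖fourierCoeff G n‖)^2
          = (|(n:ℝ)| * ‖fourierCoeff G n‖)^2 := by
        field_simp
      rw [heq]
      have : ‖fourierCoeff G n‖ ≤ |(n:ℝ)| * ‖fourierCoeff G n‖ := by
        nlinarith
      nlinarith
  -- sum up
  have hle : ∑' n : ℤ, ‖fourierCoeff G n‖^2 ≤ ∑' n : ℤ, (T/(2*π))^2 * ‖fourierCoeff G' n‖^2 :=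
    Summable.tsum_le_tsum hptwise hsumG (hsumG'.mul_left _)
  rw [tsum_mul_left, hparsG, hparsG'] at hle
  have hGint : (∫ x in (0:ℝ)..T, ‖G (x:ℝ)‖^2) = ∫ x in (0:ℝ)..T, (v x)^2 :=
    intervalIntegral.integral_congr fun x _ => by
      rw [hGx x]
      simp [hF, Complex.norm_real, Real.norm_eq_abs, sq_abs]
  have hG'int : (∫ x in (0:ℝ)..T, ‖G' (x:ℝ)‖^2) = ∫ x in (0:ℝ)..T, (deriv v x)^2 :=
    intervalIntegral.integral_congr fun x _ => by
      rw [hG'x x]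
      simp [hF', Complex.norm_real, Real.norm_eq_abs, sq_abs]
  rw [hGint, hG'int] at hle
  have h3 := mul_le_mul_of_nonneg_left hle hT.le
  have e1 : T * (1/T * ∫ x in (0:ℝ)..T, (v x)^2) = ∫ x in (0:ℝ)..T, (v x)^2 := by
    field_simp
  have e2 : T * ((T/(2*π))^2 * (1/T * ∫ x in (0:ℝ)..T, (deriv v x)^2))
      = (T/(2*π))^2 * ∫ x in (0:ℝ)..T, (deriv v x)^2 := by
    field_simp
  rw [e1, e2] at h3
  exact h3

-- existence of a zero
lemma exists_zero (T : ℝ) (hT : 0 < T) (v : ℝ → ℝ) (hc : Continuous v)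
    (hmean : (∫ x in (0:ℝ)..T, v x) = 0) : ∃ x₀ ∈ Set.Icc 0 T, v x₀ = 0 := by
  by_contra h
  push_neg at h
  have hint : IntervalIntegrable v volume 0 T := hc.intervalIntegrable _ _
  rcases lt_trichotomy (v 0) 0 with h0 | h0 | h0
  · -- v < 0 on Icc
    have hneg : ∀ x ∈ Set.Icc (0:ℝ) T, v x < 0 := by
      intro x hx
      rcases lt_trichotomy (v x) 0 with h' | h' | h'
      · exact h'
      · exact absurd h' (h x hx)
      · -- IVT gives a zero between 0 and x
        have hsub : Set.Icc (v 0) (v x) ⊆ v '' Set.Icc 0 x :=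
          intermediate_value_Icc hx.1 hc.continuousOn
        have : (0:ℝ) ∈ Set.Icc (v 0) (v x) := ⟨h0.le, h'.le⟩
        obtain ⟨c, hc1, hc2⟩ := hsub this
        exact absurd hc2 (h c ⟨hc1.1, hc1.2.trans hx.2⟩)
    have : 0 < ∫ x in (0:ℝ)..T, -v x := by
      apply intervalIntegral.intervalIntegral_pos_of_pos_on (hint.neg)
      · intro x hx
        simpa using hneg x ⟨hx.1.le, hx.2.le⟩
      · exact hT
    rw [intervalIntegral.integral_neg, hmean] at this
    simp at this
  · exact absurd h0 (h 0 ⟨le_refl 0, hT.le⟩)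
  · have hpos : ∀ x ∈ Set.Icc (0:ℝ) T, 0 < v x := by
      intro x hx
      rcases lt_trichotomy (v x) 0 with h' | h' | h'
      · have hsub : Set.Icc (v x) (v 0) ⊆ v '' Set.Icc 0 x :=
          intermediate_value_Icc' hx.1 hc.continuousOn
        have : (0:ℝ) ∈ Set.Icc (v x) (v 0) := ⟨h'.le, h0.le⟩
        obtain ⟨c, hc1, hc2⟩ := hsub this
        exact absurd hc2 (h c ⟨hc1.1, hc1.2.trans hx.2⟩)
      · exact absurd h' (h x hx)
      · exact h'
    have : 0 < ∫ x in (0:ℝ)..T, v x := by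
      apply intervalIntegral.intervalIntegral_pos_of_pos_on hint
      · intro x hx
        exact hpos x ⟨hx.1.le, hx.2.le⟩
      · exact hT
    rw [hmean] at this
    simp at this

-- Cauchy-Schwarz type bound: (∫ |g|)² ≤ T ∫ g²
lemma sq_integral_abs_le (a T : ℝ) (hT : 0 < T) (g : ℝ → ℝ) (hg : Continuous g) :
    (∫ x in a..a+T, |g x|)^2 ≤ T * ∫ x in a..a+T, (g x)^2 := by
  set A := ∫ x in a..a+T, |g x| with hA
  have hab : a ≤ a + T := by linarith
  have h1 : (0:ℝ) ≤ ∫ x in a..a+T, (|g x| - A/T)^2 := by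
    apply intervalIntegral.integral_nonneg hab
    intro x _; positivity
  have h2 : (∫ x in a..a+T, (|g x| - A/T)^2)
      = (∫ x in a..a+T, (g x)^2) - 2*(A/T)*A + (A/T)^2*T := by
    have hgint : IntervalIntegrable (fun x => |g x|) volume a (a+T) :=
      (hg.abs).intervalIntegrable _ _
    have hg2int : IntervalIntegrable (fun x => (g x)^2) volume a (a+T) :=
      (hg.pow 2).intervalIntegrable _ _
    have expand : ∀ x : ℝ, (|g x| - A/T)^2 = (g x)^2 - (2*(A/T)) * |g x| + (A/T)^2 := by
      intro x
      have : |g x|^2 = (g x)^2 := sq_abs _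
      nlinarith [_root_.sq_abs (g x)]
    rw [intervalIntegral.integral_congr (fun x _ => expand x)]
    rw [intervalIntegral.integral_add (hg2int.sub (hgint.const_mul _)) (intervalIntegrable_const)]
    rw [intervalIntegral.integral_sub hg2int (hgint.const_mul _)]
    rw [intervalIntegral.integral_const_mul, intervalIntegral.integral_const]
    rw [← hA]
    have : a + T - a = T := by ring
    rw [this, smul_eq_mul]
    ring
  rw [h2] at h1
  have hTne : T ≠ 0 := hT.ne'
  have key : T * ((∫ x in a..a+T, (g x)^2) - 2*(A/T)*A + (A/T)^2*T)
      = T * (∫ x in a..a+T, (g x)^2) - A^2 := by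
    field_simp
    ring
  have h3 : 0 ≤ T * ((∫ x in a..a+T, (g x)^2) - 2*(A/T)*A + (A/T)^2*T) :=
    mul_nonneg hT.le h1
  rw [key] at h3
  linarith

-- sup bound
lemma sup_bound (T : ℝ) (hT : 0 < T) (v : ℝ → ℝ) (hv : ContDiff ℝ 1 v)
    (hper : ∀ x, v (x + T) = v x) (hmean : (∫ x in (0:ℝ)..T, v x) = 0) :
    ∀ y : ℝ, (v y)^2 ≤ T * ∫ x in (0:ℝ)..T, (deriv v x)^2 := by
  have hvd : Differentiable ℝ v := hv.differentiable one_ne_zero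
  have hdc : Continuous (deriv v) := hv.continuous_deriv le_rfl
  have hdper : ∀ x, deriv v (x + T) = deriv v x := by
    intro x
    have h : (fun y => v (y + T)) = v := funext fun y => hper y
    rw [← deriv_comp_add_const v T x, h]
  obtain ⟨x₀, hx₀mem, hx₀⟩ := exists_zero T hT v hv.continuous hmean
  have hper' : Function.Periodic v T := hper
  have hshift : (∫ x in x₀..x₀+T, (deriv v x)^2) = ∫ x in (0:ℝ)..T, (deriv v x)^2 := by
    have hp2 : Function.Periodic (fun x => (deriv v x)^2) T := fun x => by simp [hdper x]
    have := hp2.intervalIntegral_add_eq x₀ 0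
    rwa [zero_add] at this
  intro y
  obtain ⟨x, hx, hxy⟩ := hper'.exists_mem_Ico hT y x₀
  have hx1 : x₀ ≤ x := hx.1
  have hx2 : x ≤ x₀ + T := hx.2.le
  have hftc : v x = ∫ t in x₀..x, deriv v t := by
    rw [intervalIntegral.integral_deriv_eq_sub (fun t _ => hvd t)
      (hdc.intervalIntegrable _ _), hx₀, sub_zero]
  have habs : |v x| ≤ ∫ t in x₀..x₀+T, |deriv v t| := by
    rw [hftc]
    calc |∫ t in x₀..x, deriv v t| ≤ ∫ t in x₀..x, |deriv v t| :=
          intervalIntegral.abs_integral_le_integral_abs hx1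
      _ ≤ ∫ t in x₀..x₀+T, |deriv v t| := by
          apply intervalIntegral.integral_mono_interval le_rfl hx1 hx2
          · filter_upwards with t using abs_nonneg _
          · exact (hdc.abs).intervalIntegrable _ _
  have hcs := sq_integral_abs_le x₀ T hT (deriv v) hdc
  rw [hshift] at hcs
  have habs2 : (v x)^2 ≤ (∫ t in x₀..x₀+T, |deriv v t|)^2 := by
    have h0 : (0:ℝ) ≤ ∫ t in x₀..x₀+T, |deriv v t| := (abs_nonneg _).trans habs
    nlinarith [_root_.sq_abs (v x), abs_nonneg (v x)]
  rw [hxy]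
  calc (v x)^2 ≤ (∫ t in x₀..x₀+T, |deriv v t|)^2 := habs2
    _ ≤ T * ∫ x in (0:ℝ)..T, (deriv v x)^2 := hcs


set_option maxHeartbeats 2000000 in
/-- Mountain pass geometry of the action functional: for `w ∈ (0,1)` and
`L ∈ (0, 2π√w)` there is `ε > 0` such that `S_w(v) > 0` for every zero-mean
`C¹` `L`-periodic function `v` with `0 < ∫(v')² ≤ ε²`; in particular the
infimum of `S_w` over the sphere `∫(v')² = ε²` is strictly positive, while
`S_w(0) = 0`. -/
theorem mountain_pass_geometry
    (w L : ℝ) (hw : w ∈ Set.Ioo (0:ℝ) 1)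
    (hL : L ∈ Set.Ioo (0:ℝ) (2 * π * Real.sqrt w)) :
    ∃ ε : ℝ, 0 < ε ∧
      (∀ v : ℝ → ℝ, ContDiff ℝ 1 v → (∀ x, v (x + L) = v x) →
        (∫ x in (0:ℝ)..L, v x) = 0 →
        0 < (∫ x in (0:ℝ)..L, (deriv v x)^2) →
        (∫ x in (0:ℝ)..L, (deriv v x)^2) ≤ ε^2 →
        0 < ∫ x in (0:ℝ)..L,
          ((deriv v x)^2 / 2 - Real.cosh (v x) / w + 1 / w)) ∧
      0 < sInf {s : ℝ | ∃ v : ℝ → ℝ, ContDiff ℝ 1 v ∧ (∀ x, v (x + L) = v x) ∧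
            (∫ x in (0:ℝ)..L, v x) = 0 ∧
            (∫ x in (0:ℝ)..L, (deriv v x)^2) = ε^2 ∧
            s = ∫ x in (0:ℝ)..L,
              ((deriv v x)^2 / 2 - Real.cosh (v x) / w + 1 / w)} ∧
      (∫ x in (0:ℝ)..L,
        ((deriv (fun _ : ℝ => (0:ℝ)) x)^2 / 2 - Real.cosh 0 / w + 1 / w)) = 0 := by
  obtain ⟨hw0, hw1⟩ := hw
  obtain ⟨hL0, hL2⟩ := hL
  have hπ : (0:ℝ) < π := Real.pi_pos
  set r : ℝ := (L/(2*π))^2 / w with hr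
  have hr0 : 0 < r := by positivity
  have hr1 : r < 1 := by
    have hsw : 0 < Real.sqrt w := Real.sqrt_pos.mpr hw0
    have h1 : L/(2*π) < Real.sqrt w := by
      rw [div_lt_iff₀ (by positivity)]
      linarith [hL2]
    have h2 : (L/(2*π))^2 < w := by
      have := Real.sq_sqrt hw0.le
      nlinarith [div_pos hL0 (by positivity : (0:ℝ) < 2*π)]
    rw [hr, div_lt_one hw0]
    exact h2
  set c : ℝ := 1/r with hc
  have hc1 : 1 < c := by rw [hc, lt_div_iff₀ hr0, one_mul]; exact hr1
  set t₀ : ℝ := min 1 (Real.sqrt ((c-1)/2)) with ht₀def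
  have ht₀pos : 0 < t₀ := lt_min one_pos (Real.sqrt_pos.mpr (by linarith))
  have ht₀le1 : t₀ ≤ 1 := min_le_left _ _
  have ht₀sq : t₀^2 ≤ (c-1)/2 := by
    have h1 : t₀ ≤ Real.sqrt ((c-1)/2) := min_le_right _ _
    have h2 : Real.sqrt ((c-1)/2)^2 = (c-1)/2 := Real.sq_sqrt (by linarith)
    nlinarith [ht₀pos]
  have hcosh_t₀ : Real.cosh t₀ < c := by
    have h1 : Real.cosh t₀ ≤ 1 + t₀^2 := cosh_le_one_add_sq (by rw [abs_of_pos ht₀pos]; exact ht₀le1)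
    linarith
  have hcr : Real.cosh t₀ * r < 1 := by
    have h2 := mul_lt_mul_of_pos_right hcosh_t₀ hr0
    rw [hc, one_div, inv_mul_cancel₀ hr0.ne'] at h2
    exact h2
  set κ : ℝ := (1 - Real.cosh t₀ * r)/2 with hκ
  have hκ0 : 0 < κ := by rw [hκ]; linarith
  have hLs : 0 < Real.sqrt L := Real.sqrt_pos.mpr hL0
  set ε : ℝ := t₀ / Real.sqrt L with hε
  have hε0 : 0 < ε := div_pos ht₀pos hLs
  have hLε : L * ε^2 = t₀^2 := by
    rw [hε, div_pow, Real.sq_sqrt hL0.le]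
    field_simp
  -- core bound
  have Sbound : ∀ v : ℝ → ℝ, ContDiff ℝ 1 v → (∀ x, v (x + L) = v x) →
      (∫ x in (0:ℝ)..L, v x) = 0 → (∫ x in (0:ℝ)..L, (deriv v x)^2) ≤ ε^2 →
      κ * (∫ x in (0:ℝ)..L, (deriv v x)^2)
        ≤ ∫ x in (0:ℝ)..L, ((deriv v x)^2/2 - Real.cosh (v x)/w + 1/w) := by
    intro v hv hper hmean hDle
    set D := ∫ x in (0:ℝ)..L, (deriv v x)^2 with hDdef
    have hvc : Continuous v := hv.continuous
    have hdc : Continuous (deriv v) := hv.continuous_deriv le_rfl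
    have hD0 : 0 ≤ D := intervalIntegral.integral_nonneg hL0.le (fun x _ => sq_nonneg _)
    have hsup := sup_bound L hL0 v hv hper hmean
    have hvabs : ∀ x, |v x| ≤ t₀ := by
      intro x
      have h1 : (v x)^2 ≤ t₀^2 := by
        calc (v x)^2 ≤ L * D := hsup x
          _ ≤ L * ε^2 := by nlinarith
          _ = t₀^2 := hLε
      nlinarith [_root_.sq_abs (v x), abs_nonneg (v x), ht₀pos.le]
    have hpoint : ∀ x ∈ Set.Icc (0:ℝ) L, Real.cosh (v x)/w - 1/w ≤ (Real.cosh t₀/(2*w)) * (v x)^2 := by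
      intro x _
      have h1 := cosh_sub_one_le (v x)
      have h2 : Real.cosh (v x) ≤ Real.cosh t₀ :=
        Real.cosh_le_cosh.mpr (by rw [abs_of_pos ht₀pos]; exact hvabs x)
      have heq : Real.cosh (v x)/w - 1/w = (Real.cosh (v x) - 1)/w := by ring
      rw [heq, div_le_iff₀ hw0]
      have heq2 : Real.cosh t₀/(2*w) * (v x)^2 * w = (v x)^2/2 * Real.cosh t₀ := by
        field_simp
      rw [heq2]
      nlinarith [sq_nonneg (v x)]
    have intB : IntervalIntegrable (fun x => Real.cosh (v x)/w - 1/w) volume 0 L :=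
      (((Real.continuous_cosh.comp hvc).div_const w).sub continuous_const).intervalIntegrable _ _
    have intC : IntervalIntegrable (fun x => (Real.cosh t₀/(2*w)) * (v x)^2) volume 0 L :=
      (continuous_const.mul (hvc.pow 2)).intervalIntegrable _ _
    have hmono := intervalIntegral.integral_mono_on hL0.le intB intC hpoint
    rw [intervalIntegral.integral_const_mul] at hmono
    have hpw := poincare_wirtinger L hL0 v hv hper hmean
    have hsplit : (∫ x in (0:ℝ)..L, ((deriv v x)^2/2 - Real.cosh (v x)/w + 1/w))
        = D/2 - ∫ x in (0:ℝ)..L, (Real.cosh (v x)/w - 1/w) := by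
      have e1 : (∫ x in (0:ℝ)..L, ((deriv v x)^2/2 - Real.cosh (v x)/w + 1/w))
          = ∫ x in (0:ℝ)..L, ((deriv v x)^2/2 - (Real.cosh (v x)/w - 1/w)) :=
        intervalIntegral.integral_congr (fun x _ => by ring)
      have intA : IntervalIntegrable (fun x => (deriv v x)^2/2) volume 0 L :=
        ((hdc.pow 2).div_const 2).intervalIntegrable _ _
      rw [e1, intervalIntegral.integral_sub intA intB]
      congr 1
      rw [hDdef, ← intervalIntegral.integral_div]
    rw [hsplit]
    have hpw' : (Real.cosh t₀/(2*w)) * (∫ x in (0:ℝ)..L, (v x)^2)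
        ≤ (Real.cosh t₀/(2*w)) * ((L/(2*π))^2 * D) :=
      mul_le_mul_of_nonneg_left hpw (by positivity)
    have hkey : (Real.cosh t₀/(2*w)) * ((L/(2*π))^2 * D) = (Real.cosh t₀ * r / 2) * D := by
      rw [hr]
      field_simp
    have hfin : (∫ x in (0:ℝ)..L, (Real.cosh (v x)/w - 1/w)) ≤ (Real.cosh t₀ * r/2) * D := by
      calc (∫ x in (0:ℝ)..L, (Real.cosh (v x)/w - 1/w))
          ≤ (Real.cosh t₀/(2*w)) * ∫ x in (0:ℝ)..L, (v x)^2 := hmono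
        _ ≤ (Real.cosh t₀/(2*w)) * ((L/(2*π))^2 * D) := hpw'
        _ = (Real.cosh t₀ * r / 2) * D := hkey
    rw [hκ]
    linarith
  -- the sine witness
  set k : ℝ := 2*π/L with hk
  have hk0 : 0 < k := div_pos (by positivity) hL0
  have hkL : k * L = 2*π := by
    rw [hk]
    field_simp
  set a : ℝ := ε * Real.sqrt L / (Real.sqrt 2 * π) with ha
  set v₀ : ℝ → ℝ := fun x => a * Real.sin (k*x) with hv₀def
  have hv₀smooth : ContDiff ℝ 1 v₀ :=
    contDiff_const.mul (Real.contDiff_sin.comp (contDiff_const.mul contDiff_id))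
  have hv₀per : ∀ x, v₀ (x + L) = v₀ x := by
    intro x
    have : k * (x + L) = k*x + 2*π := by rw [mul_add, hkL]
    rw [hv₀def]
    simp only
    rw [this, Real.sin_add_two_pi]
  have hv₀mean : (∫ x in (0:ℝ)..L, v₀ x) = 0 := by
    rw [hv₀def]
    simp only
    rw [intervalIntegral.integral_const_mul]
    have := intervalIntegral.integral_comp_mul_left (a := (0:ℝ)) (b := L) (fun u => Real.sin u) hk0.ne'
    rw [this, mul_zero, hkL, integral_sin, Real.cos_two_pi, Real.cos_zero]
    simp
  have hd : ∀ x, HasDerivAt v₀ (a*k*Real.cos (k*x)) x := by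
    intro x
    have h1 : HasDerivAt (fun x : ℝ => k*x) k x := by
      simpa using (hasDerivAt_id x).const_mul k
    have h2 : HasDerivAt (fun x => Real.sin (k*x)) (Real.cos (k*x) * k) x :=
      (Real.hasDerivAt_sin (k*x)).comp x h1
    have h3 := h2.const_mul a
    exact h3.congr_deriv (by ring)
  have hderiv : deriv v₀ = fun x => a*k*Real.cos (k*x) := funext fun x => (hd x).deriv
  have ha2 : a^2 = ε^2 * L / (2*π^2) := by
    rw [ha, div_pow, mul_pow, mul_pow, Real.sq_sqrt hL0.le, Real.sq_sqrt (by norm_num : (0:ℝ) ≤ 2)]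
  have hv₀int : (∫ x in (0:ℝ)..L, (deriv v₀ x)^2) = ε^2 := by
    rw [hderiv]
    have e1 : (∫ x in (0:ℝ)..L, (a*k*Real.cos (k*x))^2)
        = (a*k)^2 * ∫ x in (0:ℝ)..L, (fun u => Real.cos u ^2) (k*x) := by
      rw [← intervalIntegral.integral_const_mul]
      exact intervalIntegral.integral_congr fun x _ => by simp only; ring
    simp only at e1
    rw [e1, intervalIntegral.integral_comp_mul_left (fun u => Real.cos u^2) hk0.ne']
    rw [mul_zero, hkL, smul_eq_mul, integral_cos_sq]
    rw [Real.sin_two_pi, Real.cos_two_pi, Real.sin_zero, Real.cos_zero]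
    rw [show (a*k)^2 = a^2*k^2 by ring, ha2, hk]
    have hπne : π ≠ 0 := hπ.ne'
    have hLne : L ≠ 0 := hL0.ne'
    field_simp
    ring
  have hv₀S : (∫ x in (0:ℝ)..L, ((deriv v₀ x)^2/2 - Real.cosh (v₀ x)/w + 1/w)) ∈
      {s : ℝ | ∃ v : ℝ → ℝ, ContDiff ℝ 1 v ∧ (∀ x, v (x + L) = v x) ∧
        (∫ x in (0:ℝ)..L, v x) = 0 ∧
        (∫ x in (0:ℝ)..L, (deriv v x)^2) = ε^2 ∧
        s = ∫ x in (0:ℝ)..L, ((deriv v x)^2 / 2 - Real.cosh (v x) / w + 1 / w)} :=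
    ⟨v₀, hv₀smooth, hv₀per, hv₀mean, hv₀int, rfl⟩
  refine ⟨ε, hε0, ?_, ?_, ?_⟩
  · intro v hv hper hmean hDpos hDle
    have hb := Sbound v hv hper hmean hDle
    calc (0:ℝ) < κ * (∫ x in (0:ℝ)..L, (deriv v x)^2) := mul_pos hκ0 hDpos
      _ ≤ _ := hb
  · have hlb : ∀ b ∈ {s : ℝ | ∃ v : ℝ → ℝ, ContDiff ℝ 1 v ∧ (∀ x, v (x + L) = v x) ∧
        (∫ x in (0:ℝ)..L, v x) = 0 ∧
        (∫ x in (0:ℝ)..L, (deriv v x)^2) = ε^2 ∧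
        s = ∫ x in (0:ℝ)..L, ((deriv v x)^2 / 2 - Real.cosh (v x) / w + 1 / w)},
        κ * ε^2 ≤ b := by
      rintro b ⟨v, hv, hper, hmean, hDeq, rfl⟩
      have hb := Sbound v hv hper hmean (le_of_eq hDeq)
      rw [hDeq] at hb
      exact hb
    have hpos : (0:ℝ) < κ * ε^2 := by positivity
    exact lt_of_lt_of_le hpos (le_csInf ⟨_, hv₀S⟩ hlb)
  · have hzero : ∀ x ∈ Set.uIcc (0:ℝ) L,
        (deriv (fun _ : ℝ => (0:ℝ)) x)^2/2 - Real.cosh 0/w + 1/w = 0 := by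
      intro x _
      simp [Real.cosh_zero]
    rw [intervalIntegral.integral_congr hzero]
    simp
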